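/- Let A be a bounded linear operator on a complex Hilbert space H, K a nonempty set of unit vectors, ber(T)=sup_{k∈K}|⟨T k,k⟩|, ‖T‖_ber = sup_{k,l∈K}|⟨T k,l⟩|. Then ‖Re(A)‖_ber² ≤ ber((A*A + AA*)/2), where Re(A) = (A + A*)/2. -/

import Mathlib

open ContinuousLinearMap

noncomputable def berNum {H : Type*} [NormedAddCommGroup H] [InnerProductSpace ℂ H]
    (K : Set H) (T : H →L[ℂ] H) : ℝ :=
  sSup {x : ℝ | ∃ k ∈ K, x = ‖(inner ℂ (T k) k : ℂ)‖}

noncomputable def berNorm {H : Type*} [NormedAddCommGroup H] [InnerProductSpace ℂ H]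
    (K : Set H) (T : H →L[ℂ] H) : ℝ :=
  sSup {x : ℝ | ∃ k ∈ K, ∃ l ∈ K, x = ‖(inner ℂ (T k) l : ℂ)‖}

open ContinuousLinearMap

theorem berNorm_re_sq {H : Type*} [NormedAddCommGroup H] [InnerProductSpace ℂ H] [CompleteSpace H]
    (A : H →L[ℂ] H) (K : Set H) (hK : K.Nonempty) (hK1 : ∀ k ∈ K, ‖k‖ = 1) :
    (berNorm K ((2 : ℂ)⁻¹ • (A + adjoint A))) ^ 2
      ≤ berNum K ((2 : ℂ)⁻¹ • (adjoint A * A + A * adjoint A)) := by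
  set R := (2:ℂ)⁻¹ • (A + adjoint A) with hR
  set J := (2:ℂ)⁻¹ • (A - adjoint A) with hJ
  set T := (2:ℂ)⁻¹ • (adjoint A * A + A * adjoint A) with hT
  have hRsa : adjoint R = R := by
    rw [hR, ← star_eq_adjoint, ← star_eq_adjoint, star_smul, star_add, star_star]
    rw [add_comm]; norm_num
  have hid : T = R * R + adjoint J * J := by
    rw [hT, hR, hJ]
    rw [show adjoint ((2:ℂ)⁻¹ • (A - adjoint A)) = (2:ℂ)⁻¹ • (adjoint A - A) by
      simp only [← star_eq_adjoint, star_smul, star_sub, star_star]; norm_num]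
    simp only [smul_mul_assoc, mul_smul_comm, smul_smul, mul_add, add_mul, mul_sub, sub_mul,
      smul_add, smul_sub]
    module
  -- key pointwise identity
  have hinner : ∀ k : H, (inner ℂ (T k) k : ℂ) = (‖R k‖^2 + ‖J k‖^2 : ℝ) := by
    intro k
    rw [hid]
    have h1 : (inner ℂ ((R * R) k) k : ℂ) = inner ℂ (R k) (R k) := by
      rw [mul_apply_eq_comp]; nth_rewrite 1 [← hRsa]; exact adjoint_inner_left R k (R k)
    have h2 : (inner ℂ ((adjoint J * J) k) k : ℂ) = inner ℂ (J k) (J k) := by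
      rw [mul_apply_eq_comp]; exact adjoint_inner_left J k (J k)
    rw [add_apply, inner_add_left, h1, h2, inner_self_eq_norm_sq_to_K,
      inner_self_eq_norm_sq_to_K]
    push_cast
    norm_cast
  -- berNum set bounded above
  have hbddNum : BddAbove {x : ℝ | ∃ k ∈ K, x = ‖(inner ℂ (T k) k : ℂ)‖} := by
    refine ⟨‖T‖, ?_⟩
    rintro x ⟨k, hk, rfl⟩
    calc ‖(inner ℂ (T k) k : ℂ)‖ ≤ ‖T k‖ * ‖k‖ := norm_inner_le_norm _ _
    _ ≤ ‖T‖ * ‖k‖ * ‖k‖ := by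
        gcongr; exact le_opNorm T k
    _ = ‖T‖ := by rw [hK1 k hk]; ring
  set C := berNum K T with hC
  have hkey : ∀ k ∈ K, ‖R k‖^2 ≤ C := by
    intro k hk
    have hle : ‖(inner ℂ (T k) k : ℂ)‖ ≤ C := le_csSup hbddNum ⟨k, hk, rfl⟩
    have : ‖(inner ℂ (T k) k : ℂ)‖ = ‖R k‖^2 + ‖J k‖^2 := by
      rw [hinner k, Complex.norm_real, Real.norm_of_nonneg (by positivity)]
    nlinarith [sq_nonneg ‖J k‖]
  have hC0 : 0 ≤ C := by
    obtain ⟨k, hk⟩ := hK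
    exact le_trans (norm_nonneg _) (le_csSup hbddNum ⟨k, hk, rfl⟩)
  -- each element of berNorm set ≤ sqrt C
  have helem : ∀ x ∈ {x : ℝ | ∃ k ∈ K, ∃ l ∈ K, x = ‖(inner ℂ (R k) l : ℂ)‖}, x ≤ Real.sqrt C := by
    rintro x ⟨k, hk, l, hl, rfl⟩
    have h1 : ‖(inner ℂ (R k) l : ℂ)‖ ≤ ‖R k‖ := by
      calc ‖(inner ℂ (R k) l : ℂ)‖ ≤ ‖R k‖ * ‖l‖ := norm_inner_le_norm _ _
      _ = ‖R k‖ := by rw [hK1 l hl, mul_one]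
    have h2 : ‖R k‖ ≤ Real.sqrt C := by
      rw [show ‖R k‖ = Real.sqrt (‖R k‖^2) by rw [Real.sqrt_sq (norm_nonneg _)]]
      exact Real.sqrt_le_sqrt (hkey k hk)
    linarith
  have hne : ∃ x, x ∈ {x : ℝ | ∃ k ∈ K, ∃ l ∈ K, x = ‖(inner ℂ (R k) l : ℂ)‖} := by
    obtain ⟨k, hk⟩ := hK
    exact ⟨_, k, hk, k, hk, rfl⟩
  have hsup : berNorm K R ≤ Real.sqrt C := csSup_le (by obtain ⟨x, hx⟩ := hne; exact ⟨x, hx⟩) helem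
  have hsup0 : 0 ≤ berNorm K R := by
    obtain ⟨x, hx⟩ := hne
    obtain ⟨k, hk, l, hl, rfl⟩ := hx
    exact le_trans (norm_nonneg _) (le_csSup ⟨Real.sqrt C, helem⟩ ⟨k, hk, l, hl, rfl⟩)
  calc (berNorm K R)^2 ≤ (Real.sqrt C)^2 := by gcongr
  _ = C := Real.sq_sqrt hC0
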